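/- Let λ1, λ2, μ1, μ2 > 0 with μ1μ2 − λ1μ2 − λ1λ2 > 0, and let α1 > α2 > 0 be the roots of s² − s(μ1+μ2+λ2−λ1) + (μ1μ2 − λ1μ2 − λ1λ2), ρ = λ1(μ2+λ2)/(μ1μ2), C1 = (1−ρ)μ1(μ2−α1)/(α1−α2), C2 = (1−ρ)μ1(μ2−α2)/(α2−α1). Then ∫₀^∞ (−C1 e^{−α1 t} − C2 e^{−α2 t}) dt = 1. -/

import Mathlib

open MeasureTheory Set Real

lemma exp_int (a : ℝ) (ha : 0 < a) :
    ∫ t in Set.Ioi (0 : ℝ), Real.exp (-a * t) = 1 / a := by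
  have h := integral_comp_mul_left_Ioi (fun x => Real.exp (-x)) 0 ha
  simp only [mul_zero, smul_eq_mul] at h
  have : (fun x => Real.exp (-(a * x))) = fun x => Real.exp (-a * x) := by
    ext x; ring_nf
  rw [this] at h
  rw [h, integral_exp_neg_Ioi_zero]
  field_simp

theorem stmt_15 (l1 l2 m1 m2 : ℝ) (hl1 : 0 < l1) (hl2 : 0 < l2)
    (hm1 : 0 < m1) (hm2 : 0 < m2)
    (hpos : 0 < m1 * m2 - l1 * m2 - l1 * l2)
    (α1 α2 ρ C1 C2 : ℝ)
    (hroot1 : α1 ^ 2 - α1 * (m1 + m2 + l2 - l1) + (m1 * m2 - l1 * m2 - l1 * l2) = 0)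
    (hroot2 : α2 ^ 2 - α2 * (m1 + m2 + l2 - l1) + (m1 * m2 - l1 * m2 - l1 * l2) = 0)
    (horder : α1 > α2) (hα2 : α2 > 0)
    (hρ : ρ = l1 * (m2 + l2) / (m1 * m2))
    (hC1 : C1 = (1 - ρ) * m1 * (m2 - α1) / (α1 - α2))
    (hC2 : C2 = (1 - ρ) * m1 * (m2 - α2) / (α2 - α1)) :
    ∫ t in Set.Ioi (0 : ℝ), (-C1 * Real.exp (-α1 * t) - C2 * Real.exp (-α2 * t)) = 1 := by
  have hα1 : (0:ℝ) < α1 := lt_trans hα2 horder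
  have hne : α1 - α2 ≠ 0 := sub_ne_zero.2 (ne_of_gt horder)
  have hS : α1 + α2 = m1 + m2 + l2 - l1 := by
    have h := sub_eq_zero.2 (hroot1.trans hroot2.symm)
    have : (α1 - α2) * (α1 + α2 - (m1 + m2 + l2 - l1)) = 0 := by ring_nf; nlinarith [hroot1, hroot2]
    rcases mul_eq_zero.1 this with h1 | h1
    · exact absurd h1 hne
    · linarith
  have hP : α1 * α2 = m1 * m2 - l1 * m2 - l1 * l2 := by nlinarith [hroot1, hS]
  have i1 : ∫ t in Set.Ioi (0:ℝ), Real.exp (-α1 * t) = 1 / α1 := exp_int α1 hα1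
  have i2 : ∫ t in Set.Ioi (0:ℝ), Real.exp (-α2 * t) = 1 / α2 := exp_int α2 hα2
  have e1 : IntegrableOn (fun t => Real.exp (-α1 * t)) (Set.Ioi (0:ℝ)) :=
    exp_neg_integrableOn_Ioi 0 hα1
  have e2 : IntegrableOn (fun t => Real.exp (-α2 * t)) (Set.Ioi (0:ℝ)) :=
    exp_neg_integrableOn_Ioi 0 hα2
  rw [show (fun t => -C1 * Real.exp (-α1 * t) - C2 * Real.exp (-α2 * t)) =
      (fun t => (-C1) * Real.exp (-α1 * t) + (-C2) * Real.exp (-α2 * t)) from by ext t; ring]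
  rw [integral_add (e1.const_mul _) (e2.const_mul _), integral_const_mul, integral_const_mul, i1, i2]
  have hmm : m1 * m2 ≠ 0 := by positivity
  have h1 : α1 ≠ 0 := ne_of_gt hα1
  have h2 : α2 ≠ 0 := ne_of_gt hα2
  have h3 : α2 - α1 ≠ 0 := by intro h; apply hne; linarith
  rw [hC1, hC2, hρ]
  field_simp
  linear_combination m2*(α1-α2)^2 * hP
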